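/- If 1 → F → G → ℤ → 1 is a short exact sequence of groups with F a finitely generated free group, then G is residually finite. -/

import Mathlib

set_option linter.unusedSectionVars false

namespace Stmt11Aux

open FreeGroup

variable {α : Type*} [DecidableEq α]

/-- no adjacent cancelling pair -/
def NoCancel (l : List (α × Bool)) : Prop :=
  ∀ (k : ℕ) (i : α) (b : Bool), l[k]? = some (i, b) → l[k+1]? = some (i, !b) → False

lemma toWord_noCancel (w : FreeGroup α) : NoCancel w.toWord := by
  intro k i b h1 h2
  set l := w.toWord with hl
  have hk : k < l.length := (List.getElem?_eq_some_iff.mp h1).1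
  have hk1 : k + 1 < l.length := (List.getElem?_eq_some_iff.mp h2).1
  have hdecomp : l = l.take k ++ (i, b) :: (i, !b) :: l.drop (k+2) := by
    have e1 : l.drop k = (i, b) :: l.drop (k+1) := by
      rw [List.drop_eq_getElem_cons hk]
      congr 1
      have := h1.symm
      exact (List.getElem?_eq_some_iff.mp this.symm).2.symm ▸ rfl
    have e2 : l.drop (k+1) = (i, !b) :: l.drop (k+2) := by
      rw [List.drop_eq_getElem_cons hk1]
      congr 1
      have := h2.symm
      exact (List.getElem?_eq_some_iff.mp this.symm).2.symm ▸ rfl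
    conv_lhs => rw [← List.take_append_drop k l, e1, e2]
  have : reduce l = l.take k ++ (i, b) :: (i, !b) :: l.drop (k+2) := by
    rw [hl, reduce_toWord]; exact hdecomp
  exact reduce.not this

/-- sources of the partial permutation attached to generator `i` -/
def Src (l : List (α × Bool)) (i : α) (x : Fin (l.length+1)) : Prop :=
  (x.val ≠ 0 ∧ l[x.val - 1]? = some (i, true)) ∨ l[x.val]? = some (i, false)

/-- targets of the partial permutation attached to generator `i` -/
def Tgt (l : List (α × Bool)) (i : α) (y : Fin (l.length+1)) : Prop :=
  l[y.val]? = some (i, true) ∨ (y.val ≠ 0 ∧ l[y.val - 1]? = some (i, false))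

instance (l : List (α × Bool)) (i : α) : DecidablePred (Src l i) := fun x => by
  unfold Src; infer_instance

instance (l : List (α × Bool)) (i : α) : DecidablePred (Tgt l i) := fun x => by
  unfold Tgt; infer_instance

lemma mem_len {l : List (α × Bool)} {k : ℕ} {a : α × Bool} (h : l[k]? = some a) :
    k < l.length := (List.getElem?_eq_some_iff.mp h).1

def fwdFun (l : List (α × Bool)) (i : α) :
    {x : Fin (l.length+1) // Src l i x} → {y : Fin (l.length+1) // Tgt l i y} := fun x =>
  if h : x.1.val ≠ 0 ∧ l[x.1.val - 1]? = some (i, true)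
  then ⟨⟨x.1.val - 1, by have := x.1.isLt; omega⟩, Or.inl (by simpa using h.2)⟩
  else ⟨⟨x.1.val + 1, by have := mem_len (x.2.resolve_left h); omega⟩,
        Or.inr ⟨by simp, by simpa using x.2.resolve_left h⟩⟩

def bwdFun (l : List (α × Bool)) (i : α) :
    {y : Fin (l.length+1) // Tgt l i y} → {x : Fin (l.length+1) // Src l i x} := fun y =>
  if h : l[y.1.val]? = some (i, true)
  then ⟨⟨y.1.val + 1, by have := mem_len h; omega⟩, Or.inl ⟨by simp, by simpa using h⟩⟩
  else ⟨⟨y.1.val - 1, by have := y.1.isLt; omega⟩,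
        Or.inr (by simpa using (y.2.resolve_left h).2)⟩

lemma bwd_fwd {l : List (α × Bool)} (hr : NoCancel l) (i : α)
    (x : {x : Fin (l.length+1) // Src l i x}) : bwdFun l i (fwdFun l i x) = x := by
  by_cases h : x.1.val ≠ 0 ∧ l[x.1.val - 1]? = some (i, true)
  · rw [fwdFun, dif_pos h, bwdFun, dif_pos (by simpa using h.2)]
    apply Subtype.ext; apply Fin.ext; simp; omega
  · have h2 : l[x.1.val]? = some (i, false) := x.2.resolve_left h
    rw [fwdFun, dif_neg h, bwdFun, dif_neg (fun hcon =>
      hr x.1.val i false h2 (by simpa using hcon))]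
    apply Subtype.ext; apply Fin.ext; simp

lemma fwd_bwd {l : List (α × Bool)} (hr : NoCancel l) (i : α)
    (y : {y : Fin (l.length+1) // Tgt l i y}) : fwdFun l i (bwdFun l i y) = y := by
  by_cases h : l[y.1.val]? = some (i, true)
  · rw [bwdFun, dif_pos h, fwdFun, dif_pos ⟨by simp, by simpa using h⟩]
    apply Subtype.ext; apply Fin.ext; simp
  · have h2 : y.1.val ≠ 0 ∧ l[y.1.val - 1]? = some (i, false) := y.2.resolve_left h
    have hside : ¬((⟨y.1.val - 1, by have := y.1.isLt; omega⟩ : Fin (l.length+1)).val ≠ 0 ∧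
        l[(⟨y.1.val - 1, by have := y.1.isLt; omega⟩ : Fin (l.length+1)).val - 1]?
          = some (i, true)) := by
      rintro ⟨hne, hget⟩
      simp only [] at hne hget
      have hy2 : 2 ≤ y.1.val := by
        rcases h2 with ⟨h0, _⟩
        simp at hne
        omega
      refine hr (y.1.val - 2) i true ?_ ?_
      · simpa [show y.1.val - 1 - 1 = y.1.val - 2 by omega] using hget
      · have : y.1.val - 2 + 1 = y.1.val - 1 := by omega
        rw [this]
        simpa using h2.2
    rw [bwdFun, dif_neg h, fwdFun, dif_neg hside]
    apply Subtype.ext; apply Fin.ext; simp; omega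

/-- the permutation attached to generator `i` -/
noncomputable def genPerm (l : List (α × Bool)) (hr : NoCancel l) (i : α) :
    Equiv.Perm (Fin (l.length+1)) :=
  Equiv.extendSubtype (⟨fwdFun l i, bwdFun l i, bwd_fwd hr i, fwd_bwd hr i⟩ :
    {x : Fin (l.length+1) // Src l i x} ≃ {y : Fin (l.length+1) // Tgt l i y})

lemma genPerm_pos {l : List (α × Bool)} (hr : NoCancel l) {k : ℕ} {i : α}
    (hk : l[k]? = some (i, true)) (h1 : k + 1 < l.length + 1) (h2 : k < l.length + 1) :
    genPerm l hr i ⟨k+1, h1⟩ = ⟨k, h2⟩ := by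
  have hs : Src l i ⟨k+1, h1⟩ := Or.inl ⟨by simp, by simpa using hk⟩
  rw [genPerm, Equiv.extendSubtype_apply_of_mem _ _ hs]
  show (fwdFun l i ⟨⟨k+1, h1⟩, hs⟩).1 = _
  rw [fwdFun, dif_pos ⟨by simp, by simpa using hk⟩]
  simp

lemma genPerm_neg {l : List (α × Bool)} (hr : NoCancel l) {k : ℕ} {i : α}
    (hk : l[k]? = some (i, false)) (h1 : k < l.length + 1) (h2 : k + 1 < l.length + 1) :
    genPerm l hr i ⟨k, h1⟩ = ⟨k+1, h2⟩ := by
  have hs : Src l i ⟨k, h1⟩ := Or.inr (by simpa using hk)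
  rw [genPerm, Equiv.extendSubtype_apply_of_mem _ _ hs]
  show (fwdFun l i ⟨⟨k, h1⟩, hs⟩).1 = _
  have hside : ¬((⟨k, h1⟩ : Fin (l.length+1)).val ≠ 0 ∧
      l[(⟨k, h1⟩ : Fin (l.length+1)).val - 1]? = some (i, true)) := by
    rintro ⟨hne, hget⟩
    simp only [] at hne hget
    refine hr (k - 1) i true (by simpa using hget) ?_
    have hk0 : k ≠ 0 := by simpa using hne
    have : k - 1 + 1 = k := by omega
    rw [this]
    simpa using hk
  rw [fwdFun, dif_neg hside]

lemma eval_prod {m : ℕ} (g : α × Bool → Equiv.Perm (Fin m)) :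
    ∀ (l' : List (α × Bool)) (j : ℕ) (hj : j + l'.length < m) (hjm : j < m),
    (∀ (k : ℕ) (hk : k < l'.length) (h1 : j + k + 1 < m) (h2 : j + k < m),
       (g (l'.get ⟨k, hk⟩)) ⟨j+k+1, h1⟩ = ⟨j+k, h2⟩) →
    (l'.map g).prod ⟨j + l'.length, hj⟩ = ⟨j, hjm⟩ := by
  intro l'
  induction l' with
  | nil => intro j hj hjm _; simp
  | cons a t ih =>
    intro j hj hjm H
    have hj' : (j+1) + t.length < m := by simp at hj; omega
    have hjm' : j + 1 < m := by omega
    have step : (t.map g).prod ⟨(j+1) + t.length, hj'⟩ = ⟨j+1, hjm'⟩ := by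
      apply ih (j+1) hj' hjm'
      intro k hk h1 h2
      have hk' : k + 1 < (a :: t).length := by simp; omega
      have hH := H (k+1) hk' (by omega) (by omega)
      have hget : (a :: t).get ⟨k+1, hk'⟩ = t.get ⟨k, hk⟩ := rfl
      rw [hget] at hH
      have e1 : (⟨j+1+k+1, h1⟩ : Fin m) = ⟨j+(k+1)+1, by omega⟩ := by
        apply Fin.ext; simp; omega
      have e2 : (⟨j+1+k, h2⟩ : Fin m) = ⟨j+(k+1), by omega⟩ := by
        apply Fin.ext; simp; omega
      rw [e1, e2]
      exact hH
    have hpt : (⟨j + (a :: t).length, hj⟩ : Fin m) = ⟨(j+1) + t.length, hj'⟩ := by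
      apply Fin.ext; simp; omega
    rw [List.map_cons, List.prod_cons, Equiv.Perm.mul_apply, hpt, step]
    exact H 0 (by simp) (by omega) (by omega)

theorem exists_perm_hom (w : FreeGroup α) (hw : w ≠ 1) :
    ∃ (m : ℕ) (f : FreeGroup α →* Equiv.Perm (Fin m)), f w ≠ 1 := by
  classical
  set l := w.toWord with hl
  have hr : NoCancel l := toWord_noCancel w
  refine ⟨l.length + 1, FreeGroup.lift (genPerm l hr), ?_⟩
  have hlen : l.length ≠ 0 := by
    intro h
    exact hw (FreeGroup.toWord_eq_nil_iff.mp (List.length_eq_zero_iff.mp h))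
  have hval : (FreeGroup.lift (genPerm l hr)) w ⟨l.length, by omega⟩ = ⟨0, by omega⟩ := by
    have hw' : w = FreeGroup.mk l := (FreeGroup.mk_toWord).symm
    rw [show (FreeGroup.lift (genPerm l hr)) w = (FreeGroup.lift (genPerm l hr)) (FreeGroup.mk l) from
      congrArg _ hw', FreeGroup.lift_mk]
    have := eval_prod (fun x => cond x.2 (genPerm l hr x.1) (genPerm l hr x.1)⁻¹) l 0
      (by omega) (by omega) ?_
    · simpa using this
    · intro k hk h1 h2
      rcases hp : l.get ⟨k, hk⟩ with ⟨i, b⟩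
      have hget : l[k]? = some (i, b) := by
        rw [List.getElem?_eq_getElem hk]; exact congrArg some hp
      simp only [Nat.zero_add] at h1 h2 ⊢
      cases b with
      | true =>
        simpa using genPerm_pos hr hget h1 h2
      | false =>
        show (genPerm l hr i)⁻¹ ⟨k+1, h1⟩ = ⟨k, h2⟩
        rw [← genPerm_neg hr hget h2 h1]
        exact Equiv.symm_apply_apply _ _
  intro hcon
  rw [hcon] at hval
  simp [Fin.ext_iff] at hval
  exact hlen (by simp [hval])

end Stmt11Aux

/-- A group is residually finite if every nontrivial element lies outside some
finite-index normal subgroup (equivalently, survives in some finite quotient). -/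
def IsResiduallyFinite (G : Type*) [Group G] : Prop :=
  ∀ g : G, g ≠ 1 → ∃ N : Subgroup G, N.Normal ∧ N.FiniteIndex ∧ g ∉ N

/-- if `1 → F → G → ℤ → 1` is a short exact sequence of groups
with `F` a finitely generated free group (here `F = FreeGroup (Fin n)`), then
`G` is residually finite. -/
theorem stmt11 (n : ℕ) (G : Type*) [Group G]
    (ι : FreeGroup (Fin n) →* G) (hι : Function.Injective ι)
    (q : G →* Multiplicative ℤ) (hq : Function.Surjective q)
    (hexact : q.ker = ι.range) :
    IsResiduallyFinite G := by
  intro g hg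
  by_cases hqg : q g = 1
  case neg =>
    -- easy case: `g` survives in a finite cyclic quotient of `ℤ`
    set z : ℤ := Multiplicative.toAdd (q g) with hz
    have hz0 : z ≠ 0 := by
      intro h
      apply hqg
      have : Multiplicative.ofAdd z = q g := by simp [hz]
      rw [← this, h]; rfl
    set m : ℕ := z.natAbs + 1 with hm
    let φ : Multiplicative ℤ →* Multiplicative (ZMod m) :=
      AddMonoidHom.toMultiplicative (Int.castAddHom (ZMod m))
    refine ⟨(φ.comp q).ker, MonoidHom.normal_ker _, inferInstance, ?_⟩
    intro hmem
    rw [MonoidHom.mem_ker] at hmem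
    have h1 : ((z : ZMod m) : ZMod m) = 0 := by
      have : φ (q g) = 1 := hmem
      simpa [φ, hz] using this
    have h2 : (m : ℤ) ∣ z := (ZMod.intCast_zmod_eq_zero_iff_dvd z m).mp h1
    have h3 : m ∣ z.natAbs := by
      have := Int.natAbs_dvd_natAbs.mpr h2
      simpa using this
    have h4 : m ≤ z.natAbs := Nat.le_of_dvd (Int.natAbs_pos.mpr hz0) h3
    omega
  case pos =>
    -- hard case: `g = ι w` for some nontrivial `w`
    have hgr : g ∈ ι.range := by rw [← hexact]; exact hqg
    obtain ⟨w, hwg⟩ := hgr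
    have hw1 : w ≠ 1 := by rintro rfl; exact hg (by simpa using hwg.symm)
    obtain ⟨m, f, hf⟩ := Stmt11Aux.exists_perm_hom w hw1
    -- the intersection of the kernels of all homs to Perm (Fin m):
    -- a finite-index subgroup of F, invariant under all endomorphisms,
    -- avoiding w
    haveI hfinhoms : Finite (FreeGroup (Fin n) →* Equiv.Perm (Fin m)) := by
      have hinj : Function.Injective
          (fun (f' : FreeGroup (Fin n) →* Equiv.Perm (Fin m)) =>
            (fun a => f' (FreeGroup.of a) : Fin n → Equiv.Perm (Fin m))) := by
        intro f1 f2 h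
        exact FreeGroup.ext_hom f1 f2 (fun a => congrFun h a)
      exact Finite.of_injective _ hinj
    set K : Subgroup (FreeGroup (Fin n)) :=
      ⨅ (f' : FreeGroup (Fin n) →* Equiv.Perm (Fin m)), f'.ker with hKdef
    have hKfi : K.FiniteIndex := Subgroup.finiteIndex_iInf (fun f' => inferInstance)
    have hwK : w ∉ K := by
      rw [hKdef, Subgroup.mem_iInf]
      push_neg
      exact ⟨f, hf⟩
    have hKchar : ∀ (c : FreeGroup (Fin n) →* FreeGroup (Fin n)), ∀ k ∈ K, c k ∈ K := by
      intro c k hk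
      rw [hKdef, Subgroup.mem_iInf] at hk ⊢
      intro f'
      exact hk (f'.comp c)
    haveI hrn : ι.range.Normal := hexact ▸ q.normal_ker
    -- N₀ = ι(K) is normal in G
    set N₀ : Subgroup G := K.map ι with hN₀
    have hN₀n : N₀.Normal := by
      constructor
      intro a ha x
      obtain ⟨k, hk, rfl⟩ := ha
      have hconj : x * ι k * x⁻¹ ∈ ι.range := hrn.conj_mem (ι k) ⟨k, rfl⟩ x
      obtain ⟨k', hk'⟩ := hconj
      refine ⟨k', ?_, hk'⟩
      -- transport the conjugation automorphism to F
      set e : FreeGroup (Fin n) ≃* ι.range := MonoidHom.ofInjective hι with he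
      have hcoe : ∀ y, ((e y : ι.range) : G) = ι y := fun y => rfl
      have hsymm : ∀ u : ι.range, ι (e.symm u) = (u : G) := by
        intro u
        conv_rhs => rw [← MulEquiv.apply_symm_apply e u]
        exact (hcoe _).symm
      set c : FreeGroup (Fin n) →* FreeGroup (Fin n) :=
        e.symm.toMonoidHom.comp (((MulAut.conjNormal x : MulAut ι.range)).toMonoidHom.comp
          e.toMonoidHom) with hc
      have hck : c k = k' := by
        apply hι
        rw [hk']
        have h0 : c k = e.symm ((MulAut.conjNormal x : MulAut ι.range) (e k)) := rfl
        rw [h0, hsymm]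
        exact MulAut.conjNormal_apply x (e k)
      rw [← hck]
      exact hKchar c k hk
    -- pass to the quotient H = G / ι(K)
    haveI hN₀nI : N₀.Normal := hN₀n
    set π : G →* G ⧸ N₀ := QuotientGroup.mk' N₀ with hπ
    have hπs : Function.Surjective π := QuotientGroup.mk'_surjective N₀
    have ha1 : π g ≠ 1 := by
      intro h
      have hmem : g ∈ N₀ := (QuotientGroup.eq_one_iff g).mp h
      obtain ⟨k, hkK, hkg⟩ := hmem
      rw [← hwg] at hkg
      exact hwK (hι hkg ▸ hkK)
    have hN₀ker : N₀ ≤ q.ker := by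
      rintro a ⟨k, _, rfl⟩
      have : ι k ∈ ι.range := ⟨k, rfl⟩
      rw [← hexact] at this
      exact this
    set qb : G ⧸ N₀ →* Multiplicative ℤ := QuotientGroup.lift N₀ q hN₀ker with hqb
    have hqbπ : ∀ x : G, qb (π x) = q x := fun x => rfl
    -- the kernel of qb is finite
    haveI hKn : K.Normal := by
      constructor
      intro a ha x
      rw [hKdef, Subgroup.mem_iInf] at ha ⊢
      intro f'
      exact (MonoidHom.normal_ker f').conj_mem a (ha f') x
    set ψ : FreeGroup (Fin n) →* G ⧸ N₀ := π.comp ι with hψ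
    have hKψ : K ≤ ψ.ker := by
      intro k hk
      have : ι k ∈ N₀ := ⟨k, hk, rfl⟩
      exact (QuotientGroup.eq_one_iff (ι k)).mpr this
    set lift2 : FreeGroup (Fin n) ⧸ K →* G ⧸ N₀ := QuotientGroup.lift K ψ hKψ with hl2
    haveI : K.FiniteIndex := hKfi
    haveI hKq : Finite (FreeGroup (Fin n) ⧸ K) := inferInstance
    have hkerA : qb.ker = ψ.range := by
      ext h
      constructor
      · intro hh
        obtain ⟨x, rfl⟩ := hπs h
        have hx : q x = 1 := by rw [← hqbπ x]; exact hh
        have hxr : x ∈ ι.range := by rw [← hexact]; exact hx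
        obtain ⟨y, rfl⟩ := hxr
        exact ⟨y, rfl⟩
      · rintro ⟨y, rfl⟩
        show qb (π (ι y)) = 1
        rw [hqbπ]
        have : ι y ∈ q.ker := by rw [hexact]; exact ⟨y, rfl⟩
        exact this
    have hrangeEq : ψ.range = lift2.range := by
      ext h
      constructor
      · rintro ⟨y, rfl⟩; exact ⟨QuotientGroup.mk y, rfl⟩
      · rintro ⟨y', rfl⟩
        obtain ⟨y, rfl⟩ := QuotientGroup.mk_surjective y'
        exact ⟨y, rfl⟩
    haveI hfinker : Finite qb.ker := by
      rw [hkerA, hrangeEq]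
      exact Set.Finite.to_subtype (Set.finite_range lift2)
    -- pick a lift of the generator of ℤ
    obtain ⟨t0, ht0⟩ := hq (Multiplicative.ofAdd 1)
    set t : G ⧸ N₀ := π t0 with ht
    have hqt : qb t = Multiplicative.ofAdd 1 := by rw [ht, hqbπ, ht0]
    -- a power of t centralizes the kernel of qb
    haveI : Finite (MulAut ↥qb.ker) :=
      Finite.of_injective _ MulEquiv.toEquiv_injective
    set ρ : G ⧸ N₀ →* MulAut ↥qb.ker := MulAut.conjNormal with hρ
    set M : ℕ := orderOf (ρ t) with hM
    have hM0 : 0 < M := orderOf_pos (ρ t)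
    have hρM : ρ (t ^ M) = 1 := by rw [map_pow, hM]; exact pow_orderOf_eq_one (ρ t)
    have hcomm : ∀ c ∈ qb.ker, t ^ M * c = c * t ^ M := by
      intro c hc
      have h1 : (MulAut.conjNormal (t ^ M) (⟨c, hc⟩ : ↥qb.ker)) = ⟨c, hc⟩ := by
        have : MulAut.conjNormal (t ^ M) = ρ (t ^ M) := rfl
        rw [this, hρM]; rfl
      have h2 : t ^ M * c * (t ^ M)⁻¹ = c := by
        rw [← MulAut.conjNormal_apply (t ^ M) (⟨c, hc⟩ : ↥qb.ker), h1]
      calc t ^ M * c = t ^ M * c * (t ^ M)⁻¹ * t ^ M := by group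
        _ = c * t ^ M := by rw [h2]
    have hdecomp : ∀ h : G ⧸ N₀, h * (t ^ (Multiplicative.toAdd (qb h)))⁻¹ ∈ qb.ker := by
      intro h
      show qb (h * (t ^ (Multiplicative.toAdd (qb h)))⁻¹) = 1
      rw [map_mul, map_inv, map_zpow, hqt,
        show (Multiplicative.ofAdd (1:ℤ)) ^ (Multiplicative.toAdd (qb h)) = qb h by
          rw [← ofAdd_zsmul, smul_eq_mul, mul_one, ofAdd_toAdd]]
      simp
    have hcentral : (t ^ M) ∈ Subgroup.center (G ⧸ N₀) := by
      rw [Subgroup.mem_center_iff]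
      intro h
      set k : ℤ := Multiplicative.toAdd (qb h) with hk
      set c : G ⧸ N₀ := h * (t ^ k)⁻¹ with hcdef
      have hc : c ∈ qb.ker := hdecomp h
      have hh : h = c * t ^ k := by rw [hcdef]; group
      have h1 : t ^ M * c = c * t ^ M := hcomm c hc
      have h2 : t ^ k * t ^ M = t ^ M * t ^ k := by
        rw [← zpow_natCast t M, ← zpow_add, ← zpow_add, add_comm]
      rw [hh, mul_assoc, h2, ← mul_assoc, ← h1, mul_assoc]
    set Z : Subgroup (G ⧸ N₀) := Subgroup.zpowers (t ^ M) with hZ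
    have hZc : Z ≤ Subgroup.center (G ⧸ N₀) := Subgroup.zpowers_le.mpr hcentral
    have hZn : Z.Normal := by
      constructor
      intro z hz x
      have hzc := Subgroup.mem_center_iff.mp (hZc hz) x
      rw [hzc, mul_inv_cancel_right]
      exact hz
    have hZfi : Z.FiniteIndex := by
      have hsurj : Function.Surjective
          (fun p : ↥qb.ker × Fin M =>
            ((QuotientGroup.mk ((p.1 : G ⧸ N₀) * t ^ (p.2 : ℕ))) : (G ⧸ N₀) ⧸ Z)) := by
        intro hbar
        obtain ⟨h, rfl⟩ := QuotientGroup.mk_surjective hbar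
        set k : ℤ := Multiplicative.toAdd (qb h) with hk
        have hc : h * (t ^ k)⁻¹ ∈ qb.ker := hdecomp h
        set r : ℕ := (k % (M : ℤ)).toNat with hr
        have hkM0 : (0:ℤ) ≤ k % (M:ℤ) := Int.emod_nonneg k (by exact_mod_cast hM0.ne')
        have hkMM : k % (M:ℤ) < (M:ℤ) := Int.emod_lt_of_pos k (by exact_mod_cast hM0)
        have hrM : r < M := by omega
        refine ⟨⟨⟨h * (t ^ k)⁻¹, hc⟩, ⟨r, hrM⟩⟩, ?_⟩
        show QuotientGroup.mk (h * (t ^ k)⁻¹ * t ^ r) = QuotientGroup.mk h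
        rw [QuotientGroup.eq]
        have hcalc : (h * (t ^ k)⁻¹ * t ^ r)⁻¹ * h = t ^ (k - (r : ℤ)) := by
          rw [zpow_sub, ← zpow_natCast t r]
          group
        rw [hcalc]
        have hdvd : k - (r : ℤ) = (M : ℤ) * (k / (M : ℤ)) := by
          have := Int.emod_add_mul_ediv k (M : ℤ)
          omega
        rw [hdvd]
        refine Subgroup.mem_zpowers_iff.mpr ⟨k / (M : ℤ), ?_⟩
        show (t ^ M) ^ (k / (M : ℤ)) = t ^ ((M : ℤ) * (k / (M : ℤ)))
        rw [← zpow_natCast t M, ← zpow_mul]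
      haveI : Finite ((G ⧸ N₀) ⧸ Z) := Finite.of_surjective _ hsurj
      exact Subgroup.finiteIndex_of_finite_quotient
    refine ⟨Z.comap π, Subgroup.Normal.comap hZn π, ?_, ?_⟩
    · constructor
      rw [Subgroup.index_comap_of_surjective Z hπs]
      exact hZfi.index_ne_zero
    · intro hmemZ
      rw [Subgroup.mem_comap] at hmemZ
      obtain ⟨j, hj⟩ := Subgroup.mem_zpowers_iff.mp hmemZ
      have h1 : qb (π g) = 1 := by rw [hqbπ]; exact hqg
      rw [← hj, map_zpow, map_pow, hqt] at h1
      have h2 : ((M : ℤ) * j) = 0 := by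
        rw [← zpow_natCast (Multiplicative.ofAdd (1:ℤ)) M, ← zpow_mul, ← ofAdd_zsmul,
          smul_eq_mul, mul_one] at h1
        exact ofAdd_eq_one.mp h1
      have hj0 : j = 0 := by
        have hMne : (M:ℤ) ≠ 0 := by exact_mod_cast hM0.ne'
        exact (mul_eq_zero.mp h2).resolve_left hMne
      rw [hj0, zpow_zero] at hj
      exact ha1 hj.symm
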